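/- Let ψ:(0,∞)→(0,∞) be non-decreasing with ∫₀^r s/ψ(s) ds < ∞ for every r>0, and let Φ(r) := r²/(2∫₀^r s/ψ(s) ds). Let a∈(0,∞], β>0 and c∈(0,1]. If ψ satisfies L_a(β,c), then necessarily β < 2, and Φ satisfies L_a(β,c). -/

import Mathlib

open MeasureTheory Set
open scoped ENNReal

/-- Let `ψ : (0,∞) → (0,∞)` be non-decreasing with
`∫₀^r s/ψ(s) ds < ∞` for every `r > 0`, and `Φ(r) = r²/(2∫₀^r s/ψ(s) ds)`.
Let `a ∈ (0,∞]`, `β > 0`, `c ∈ (0,1]`.  If `ψ` satisfies `L_a(β, c)`, then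
necessarily `β < 2`, and `Φ` satisfies `L_a(β, c)`. -/
theorem stmt_6 (ψ Φ : ℝ → ℝ)
    (hψ_pos : ∀ r : ℝ, 0 < r → 0 < ψ r)
    (hψ_mono : ∀ r s : ℝ, 0 < r → r ≤ s → ψ r ≤ ψ s)
    (hψ_int : ∀ r : ℝ, 0 < r → IntegrableOn (fun s => s / ψ s) (Ioo 0 r))
    (hΦ : ∀ r : ℝ, 0 < r → Φ r = r ^ 2 / (2 * ∫ s in Ioo (0:ℝ) r, s / ψ s))
    (a : ℝ≥0∞) (ha : 0 < a) (β c : ℝ) (hβ : 0 < β) (hc : 0 < c) (hc1 : c ≤ 1)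
    (hL : ∀ r R : ℝ, 0 < r → r ≤ R → ENNReal.ofReal R < a →
      c * (R / r) ^ β ≤ ψ R / ψ r) :
    β < 2 ∧
      ∀ r R : ℝ, 0 < r → r ≤ R → ENNReal.ofReal R < a →
        c * (R / r) ^ β ≤ Φ R / Φ r := by
  -- choose r₀ > 0 with ofReal r₀ < a
  obtain ⟨r₀, hr₀, hr₀a⟩ : ∃ r₀ : ℝ, 0 < r₀ ∧ ENNReal.ofReal r₀ < a := by
    rcases eq_or_ne a ⊤ with rfl | ha'
    · exact ⟨1, one_pos, by simp⟩
    · refine ⟨a.toReal / 2, ?_, ?_⟩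
      · have h0 : 0 < a.toReal := ENNReal.toReal_pos ha.ne' ha'
        positivity
      · have h0 : 0 < a.toReal := ENNReal.toReal_pos ha.ne' ha'
        rw [ENNReal.ofReal_lt_iff_lt_toReal (by positivity) ha']
        linarith
  have hβ2 : β < 2 := by
    by_contra h
    push_neg at h
    have key : ∀ s ∈ Ioo (0:ℝ) r₀,
        (c * r₀ ^ β / ψ r₀) * s ^ (1 - β) ≤ s / ψ s := by
      intro s hs
      have hs0 := hs.1
      have hψs := hψ_pos s hs0
      have hψr := hψ_pos r₀ hr₀
      have h1 := hL s r₀ hs0 hs.2.le hr₀a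
      have h2 : c * r₀ ^ β * s ^ (-β) ≤ ψ r₀ / ψ s := by
        have heq : (r₀ / s) ^ β = r₀ ^ β * s ^ (-β) := by
          rw [Real.div_rpow hr₀.le hs0.le, Real.rpow_neg hs0.le, div_eq_mul_inv]
        rw [heq, ← mul_assoc] at h1
        exact h1
      have h3 : c * r₀ ^ β * s ^ (-β) * ψ s ≤ ψ r₀ :=
        (le_div_iff₀ hψs).mp h2
      have h4 : s * (c * r₀ ^ β * s ^ (-β) * ψ s) / (ψ r₀ * ψ s) ≤
          s * ψ r₀ / (ψ r₀ * ψ s) := by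
        gcongr
      calc (c * r₀ ^ β / ψ r₀) * s ^ (1 - β)
          = s * (c * r₀ ^ β * s ^ (-β) * ψ s) / (ψ r₀ * ψ s) := by
            rw [show (1:ℝ) - β = 1 + (-β) by ring, Real.rpow_add hs0, Real.rpow_one]
            field_simp
        _ ≤ s * ψ r₀ / (ψ r₀ * ψ s) := h4
        _ = s / ψ s := by
            field_simp
    have hψr := hψ_pos r₀ hr₀
    have hC : 0 < c * r₀ ^ β / ψ r₀ := by positivity
    have hint : IntegrableOn (fun s : ℝ => (c * r₀ ^ β / ψ r₀) * s ^ (1 - β)) (Ioo 0 r₀) := by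
      refine Integrable.mono' (hψ_int r₀ hr₀) ?_ ?_
      · exact (((measurable_id.pow_const (1 - β)).const_mul _).aestronglyMeasurable).restrict
      · filter_upwards [ae_restrict_mem measurableSet_Ioo] with s hs
        have hs0 := hs.1
        rw [Real.norm_eq_abs, abs_of_nonneg (by positivity)]
        exact key s hs
    have hint' : IntegrableOn (fun s : ℝ => s ^ (1 - β)) (Ioo (0:ℝ) r₀) := by
      have h2 := hint.const_mul (c * r₀ ^ β / ψ r₀)⁻¹
      have heq : (fun s : ℝ => (c * r₀ ^ β / ψ r₀)⁻¹ * ((c * r₀ ^ β / ψ r₀) * s ^ (1 - β)))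
          = fun s : ℝ => s ^ (1 - β) := by
        funext s
        rw [← mul_assoc, inv_mul_cancel₀ hC.ne', one_mul]
      rwa [heq] at h2
    rw [intervalIntegral.integrableOn_Ioo_rpow_iff hr₀] at hint'
    linarith
  refine ⟨hβ2, fun r R hr hrR hRa => ?_⟩
  have hR : 0 < R := lt_of_lt_of_le hr hrR
  set k := R / r with hk
  have hk1 : 1 ≤ k := (one_le_div hr).mpr hrR
  have hk0 : 0 < k := lt_of_lt_of_le one_pos hk1
  have hkr : k * r = R := by rw [hk, div_mul_cancel₀ R hr.ne']
  -- positivity of the integrals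
  have Ipos : ∀ t : ℝ, 0 < t → 0 < ∫ s in Ioo (0:ℝ) t, s / ψ s := by
    intro t ht
    rw [setIntegral_pos_iff_support_of_nonneg_ae ?_ (hψ_int t ht)]
    · have hsub : Ioo (0:ℝ) t ⊆ Function.support (fun s => s / ψ s) ∩ Ioo 0 t := by
        intro s hs
        refine ⟨?_, hs⟩
        simp only [Function.mem_support]
        exact (div_pos hs.1 (hψ_pos s hs.1)).ne'
      calc (0:ℝ≥0∞) < volume (Ioo (0:ℝ) t) := by
            simp [Real.volume_Ioo, ENNReal.ofReal_pos, ht]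
        _ ≤ _ := measure_mono hsub
    · filter_upwards [ae_restrict_mem measurableSet_Ioo] with s hs
      exact (div_pos hs.1 (hψ_pos s hs.1)).le
  have IR := Ipos R hR
  have Ir := Ipos r hr
  have hkβ : 0 < c * k ^ β := by positivity
  -- interval integrability
  have hiiR : IntervalIntegrable (fun s => s / ψ s) volume 0 R := by
    rw [intervalIntegrable_iff_integrableOn_Ioo_of_le hR.le]
    exact hψ_int R hR
  have hiir : IntervalIntegrable (fun s => s / ψ s) volume 0 r := by
    rw [intervalIntegrable_iff_integrableOn_Ioo_of_le hr.le]
    exact hψ_int r hr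
  have hii1 : IntervalIntegrable (fun t => (k * t) / ψ (k * t)) volume 0 r := by
    have h := hiiR.comp_mul_left (c := k)
    have h0 : (0:ℝ) / k = 0 := zero_div k
    have hRk : R / k = r := by rw [← hkr, mul_div_cancel_left₀ _ hk0.ne']
    rw [h0, hRk] at h
    exact h
  have hii2 : IntervalIntegrable (fun t => t / ψ (k * t)) volume 0 r := by
    have h := hii1.div_const k
    have heq : (fun t => (k * t) / ψ (k * t) / k) = fun t => t / ψ (k * t) := by
      funext t
      rw [div_div, mul_comm (ψ (k * t)) k, ← div_div, mul_div_cancel_left₀ _ hk0.ne']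
    rwa [heq] at h
  -- the key integral inequality
  have hIRle : (∫ s in Ioo (0:ℝ) R, s / ψ s) ≤
      k * k * ((c * k ^ β)⁻¹ * ∫ s in Ioo (0:ℝ) r, s / ψ s) := by
    have e1 : (∫ s in Ioo (0:ℝ) R, s / ψ s) = ∫ s in (0:ℝ)..R, s / ψ s := by
      rw [intervalIntegral.integral_of_le hR.le, integral_Ioc_eq_integral_Ioo]
    have e2 : (∫ s in Ioo (0:ℝ) r, s / ψ s) = ∫ s in (0:ℝ)..r, s / ψ s := by
      rw [intervalIntegral.integral_of_le hr.le, integral_Ioc_eq_integral_Ioo]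
    have e3 : (∫ t in (0:ℝ)..r, (k * t) / ψ (k * t)) = k⁻¹ • ∫ s in (0:ℝ)..R, s / ψ s := by
      have h := intervalIntegral.integral_comp_mul_left (a := 0) (b := r)
        (fun s => s / ψ s) hk0.ne'
      rw [mul_zero, hkr] at h
      exact h
    have e4 : (∫ t in (0:ℝ)..r, (k * t) / ψ (k * t)) = k * ∫ t in (0:ℝ)..r, t / ψ (k * t) := by
      rw [← intervalIntegral.integral_const_mul]
      congr 1
      funext t
      rw [mul_div_assoc]
    have hmono : (∫ t in (0:ℝ)..r, t / ψ (k * t)) ≤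
        ∫ t in (0:ℝ)..r, (c * k ^ β)⁻¹ * (t / ψ t) := by
      apply intervalIntegral.integral_mono_on hr.le hii2 (hiir.const_mul _)
      intro t ht
      rcases eq_or_lt_of_le ht.1 with rfl | ht0
      · simp
      · have hψt := hψ_pos t ht0
        have hψkt := hψ_pos (k * t) (by positivity)
        have hta : ENNReal.ofReal (k * t) < a := by
          refine lt_of_le_of_lt (ENNReal.ofReal_le_ofReal ?_) hRa
          calc k * t ≤ k * r := by nlinarith [ht.2]
            _ = R := hkr
        have h1 := hL t (k * t) ht0 (le_mul_of_one_le_left ht0.le hk1) hta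
        rw [mul_div_assoc, div_self ht0.ne', mul_one] at h1
        have h2 : c * k ^ β * ψ t ≤ ψ (k * t) := (le_div_iff₀ hψt).mp h1
        have heq : (c * k ^ β)⁻¹ * (t / ψ t) = t / (c * k ^ β * ψ t) := by
          field_simp
        rw [heq]
        gcongr
    calc (∫ s in Ioo (0:ℝ) R, s / ψ s)
        = k * ∫ t in (0:ℝ)..r, (k * t) / ψ (k * t) := by
          rw [e3, smul_eq_mul, ← mul_assoc, mul_inv_cancel₀ hk0.ne', one_mul, e1]
      _ = k * (k * ∫ t in (0:ℝ)..r, t / ψ (k * t)) := by rw [e4]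
      _ ≤ k * (k * ∫ t in (0:ℝ)..r, (c * k ^ β)⁻¹ * (t / ψ t)) := by
          have := mul_le_mul_of_nonneg_left hmono hk0.le
          nlinarith [mul_le_mul_of_nonneg_left this hk0.le]
      _ = k * k * ((c * k ^ β)⁻¹ * ∫ s in Ioo (0:ℝ) r, s / ψ s) := by
          rw [intervalIntegral.integral_const_mul, e2]
          ring
  -- conclude
  rw [hΦ R hR, hΦ r hr]
  set IRv := ∫ s in Ioo (0:ℝ) R, s / ψ s
  set Irv := ∫ s in Ioo (0:ℝ) r, s / ψ s
  have hratio : (R ^ 2 / (2 * IRv)) / (r ^ 2 / (2 * Irv)) = (R ^ 2 * Irv) / (r ^ 2 * IRv) := by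
    field_simp
  rw [hratio, le_div_iff₀ (by positivity)]
  have hR2 : k * k * r ^ 2 = R ^ 2 := by
    rw [← hkr]
    ring
  calc c * k ^ β * (r ^ 2 * IRv)
      ≤ c * k ^ β * (r ^ 2 * (k * k * ((c * k ^ β)⁻¹ * Irv))) := by gcongr
    _ = (k * k * r ^ 2) * ((c * k ^ β) * (c * k ^ β)⁻¹) * Irv := by ring
    _ = R ^ 2 * Irv := by rw [mul_inv_cancel₀ hkβ.ne', mul_one, hR2]
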